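/- arXiv:1606.01832 — 2 statements merged into one kernel-verified Lean document; each statement's English description precedes it below -/
import Mathlib

section
/- Let A be a noetherian commutative ring, 𝔞 an ideal, and {M_k} an 𝔞-adic system in which each M_k is a flat A/𝔞^{k+1}-module. Then the limit M̂ = lim M_k is a flat A-module. -/
universe u v

section Transport
variable (R : Type u) [CommRing R] (M : Type v) [AddCommGroup M] [Module R M]

private theorem flat_ulift_ring [Module.Flat R M] : Module.Flat (ULift.{v} R) M := by
  letI : Algebra (ULift.{v} R) R := (ULift.ringEquiv : ULift.{v} R ≃+* R).toRingHom.toAlgebra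
  haveI hT : IsScalarTower (ULift.{v} R) R M := ⟨fun r s m => by
    show (r.down * s) • m = r.down • (s • m)
    rw [mul_smul]⟩
  haveI hF : Module.Flat (ULift.{v} R) R := by
    letI e : R ≃ₗ[ULift.{v} R] ULift.{v} R :=
      { toFun := ULift.up, invFun := ULift.down,
        map_add' := fun _ _ => rfl, map_smul' := fun _ _ => rfl,
        left_inv := fun _ => rfl, right_inv := fun _ => rfl }
    exact Module.Flat.of_linearEquiv e
  exact @Module.Flat.trans (ULift.{v} R) R M _ _ _ _ _ _ hT hF _

private theorem flat_unlift [Module.Flat (ULift.{v} R) M] : Module.Flat R M := by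
  letI : Algebra R (ULift.{v} R) :=
    ((ULift.ringEquiv : ULift.{v} R ≃+* R).symm.toRingHom).toAlgebra
  haveI hT : IsScalarTower R (ULift.{v} R) M := ⟨fun r s m => by
    show (⟨r * s.down⟩ : ULift.{v} R) • m = r • (s • m)
    show (r * s.down) • m = r • s.down • m
    rw [mul_smul]⟩
  haveI hF : Module.Flat R (ULift.{v} R) := Module.Flat.ulift
  exact @Module.Flat.trans R (ULift.{v} R) M _ _ _ _ _ _ hT hF _
end Transport

private theorem down_sum {α : Type*} [AddCommMonoid α] {ι : Type*} (s : Finset ι)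
    (g : ι → ULift α) : (∑ i ∈ s, g i).down = ∑ i ∈ s, (g i).down :=
  map_sum (AddEquiv.ulift : ULift α ≃+ α) g s

section Rel
variable {R : Type u} [CommRing R] {M : Type v} [AddCommGroup M] [Module R M]

/-- Single-relation equational criterion, universe polymorphic, forward direction. -/
private theorem trivial_rel [Module.Flat R M] {s : ℕ} {f : Fin s → R} {x : Fin s → M}
    (h : ∑ i, f i • x i = 0) :
    ∃ (t : ℕ) (a : Fin s → Fin t → R) (y : Fin t → M),
      (∀ i, x i = ∑ j, a i j • y j) ∧ ∀ j, ∑ i, f i * a i j = 0 := by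
  haveI : Module.Flat (ULift.{v} R) M := flat_ulift_ring R M
  haveI : Module.Flat (ULift.{v} R) (ULift.{u} M) := Module.Flat.ulift
  set f' : ULift.{max u v} (Fin s) → ULift.{v} R := fun i => ⟨f i.down⟩ with hf'
  set x' : ULift.{max u v} (Fin s) → ULift.{u} M := fun i => ⟨x i.down⟩ with hx'
  have h' : ∑ i, f' i • x' i = 0 := by
    apply ULift.down_injective
    rw [down_sum, show (0 : ULift.{u} M).down = 0 from rfl, ← h]
    exact Fintype.sum_equiv Equiv.ulift _ _ (fun i => rfl)
  obtain ⟨k, a', y', hx1, ha1⟩ := Module.Flat.isTrivialRelation_of_sum_smul_eq_zero h'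
  set e := Fintype.equivFin (Fin k)
  refine ⟨Fintype.card (Fin k), fun i j => (a' ⟨i⟩ (e.symm j)).down,
    fun j => (y' (e.symm j)).down, fun i => ?_, fun j => ?_⟩
  · have := congrArg ULift.down (hx1 ⟨i⟩)
    rw [down_sum] at this
    rw [show x i = (x' ⟨i⟩).down from rfl, this]
    refine Fintype.sum_equiv e _ _ (fun j => ?_)
    simp only [e.symm_apply_apply]
    rfl
  · have h2 := congrArg ULift.down (ha1 (e.symm j))
    rw [down_sum, show (0 : ULift.{v} R).down = 0 from rfl] at h2
    rw [← h2]
    exact Fintype.sum_equiv Equiv.ulift.symm _ _ (fun i => rfl)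

/-- Single-relation equational criterion, universe polymorphic, backward direction. -/
private theorem flat_of_rel
    (H : ∀ (s : ℕ) (f : Fin s → R) (x : Fin s → M), ∑ i, f i • x i = 0 →
      ∃ (t : ℕ) (a : Fin s → Fin t → R) (y : Fin t → M),
        (∀ i, x i = ∑ j, a i j • y j) ∧ ∀ j, ∑ i, f i * a i j = 0) :
    Module.Flat R M := by
  haveI : Module.Flat (ULift.{v} R) (ULift.{u} M) := by
    apply Module.Flat.of_forall_isTrivialRelation
    intro l f' x' hsum
    set n := Fintype.card (Fin l) with hn
    set e := Fintype.equivFin (Fin l) with he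
    set f : Fin n → R := fun i => (f' (e.symm i)).down with hf
    set x : Fin n → M := fun i => (x' (e.symm i)).down with hx
    have h0 : ∑ i, f i • x i = 0 := by
      have hd := congrArg ULift.down hsum
      rw [down_sum, show (0 : ULift.{u} M).down = 0 from rfl] at hd
      rw [← hd]
      refine (Fintype.sum_equiv e _ _ (fun i => ?_)).symm
      simp only [hf, hx, e.symm_apply_apply]
      rfl
    obtain ⟨t, a, y, h1, h2⟩ := H n f x h0
    refine ⟨t,
      fun i j => ⟨a (e i) j⟩, fun j => ⟨y j⟩, fun i => ?_, fun j => ?_⟩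
    · apply ULift.down_injective
      rw [down_sum]
      have hxi : (x' i).down = x (e i) := by simp only [hx, e.symm_apply_apply]
      rw [hxi, h1 (e i)]
      exact Finset.sum_congr rfl (fun j _ => rfl)
    · apply ULift.down_injective
      rw [down_sum, show (0 : ULift.{v} R).down = 0 from rfl, ← h2 j]
      refine Fintype.sum_equiv e _ _ (fun i => ?_)
      show (f' i).down * a (e i) j = f (e i) * a (e i) j
      simp only [hf, e.symm_apply_apply]
  haveI : Module.Flat (ULift.{v} R) M := Module.Flat.of_ulift
  exact flat_unlift R M
end Rel
section Mat
variable {R : Type u} [CommRing R] {M : Type v} [AddCommGroup M] [Module R M]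

/-- Solutions of systems of linear equations in a flat module come from solutions
in the ring: matrix version of the equational criterion. -/
private theorem matrix_rel [Module.Flat R M] :
    ∀ (s : ℕ) {t : ℕ} (B : Fin s → Fin t → R) (y : Fin t → M),
    (∀ i, ∑ q, B i q • y q = 0) →
    ∃ (u : ℕ) (C : Fin t → Fin u → R) (w : Fin u → M),
      (∀ q, y q = ∑ p, C q p • w p) ∧ (∀ i p, ∑ q, B i q * C q p = 0) := by
  intro s
  induction s with
  | zero =>
    intro t B y _
    refine ⟨t, fun q p => if q = p then 1 else 0, y, fun q => ?_, fun i => i.elim0⟩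
    simp [ite_smul]
  | succ s ih =>
    intro t B y hB
    obtain ⟨t1, a, y1, hya, haB⟩ := trivial_rel (hB 0)
    set B' : Fin s → Fin t1 → R := fun i j => ∑ q, B i.succ q * a q j with hB'def
    have hB' : ∀ i, ∑ j, B' i j • y1 j = 0 := by
      intro i
      have : ∀ j, B' i j • y1 j = ∑ q, B i.succ q • (a q j • y1 j) := by
        intro j
        rw [hB'def, Finset.sum_smul]
        exact Finset.sum_congr rfl (fun q _ => mul_smul _ _ _)
      rw [Finset.sum_congr rfl (fun j _ => this j), Finset.sum_comm]
      have : ∀ q, ∑ j, B i.succ q • (a q j • y1 j) = B i.succ q • y q := by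
        intro q
        rw [← Finset.smul_sum, ← hya q]
      rw [Finset.sum_congr rfl (fun q _ => this q)]
      exact hB i.succ
    obtain ⟨u, C1, w, hy1, hBC1⟩ := ih B' y1 hB'
    refine ⟨u, fun q p => ∑ j, a q j * C1 j p, w, fun q => ?_, fun i p => ?_⟩
    · rw [hya q]
      have : ∀ j, a q j • y1 j = ∑ p, a q j • (C1 j p • w p) := by
        intro j
        rw [← Finset.smul_sum, ← hy1 j]
      rw [Finset.sum_congr rfl (fun j _ => this j), Finset.sum_comm]
      refine Finset.sum_congr rfl (fun p _ => ?_)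
      rw [Finset.sum_smul]
      exact Finset.sum_congr rfl (fun j _ => (mul_smul _ _ _).symm)
    · rcases Fin.eq_zero_or_eq_succ i with hi | ⟨i', hi⟩
      · subst hi
        have : ∀ q, B 0 q * ∑ j, a q j * C1 j p = ∑ j, (B 0 q * a q j) * C1 j p := by
          intro q
          rw [Finset.mul_sum]
          exact Finset.sum_congr rfl (fun j _ => (mul_assoc _ _ _).symm)
        rw [Finset.sum_congr rfl (fun q _ => this q), Finset.sum_comm]
        have : ∀ j, ∑ q, (B 0 q * a q j) * C1 j p = (∑ q, B 0 q * a q j) * C1 j p :=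
          fun j => (Finset.sum_mul _ _ _).symm
        rw [Finset.sum_congr rfl (fun j _ => this j)]
        simp [haB]
      · subst hi
        have : ∀ q, B i'.succ q * ∑ j, a q j * C1 j p = ∑ j, (B i'.succ q * a q j) * C1 j p := by
          intro q
          rw [Finset.mul_sum]
          exact Finset.sum_congr rfl (fun j _ => (mul_assoc _ _ _).symm)
        rw [Finset.sum_congr rfl (fun q _ => this q), Finset.sum_comm]
        have : ∀ j, ∑ q, (B i'.succ q * a q j) * C1 j p = B' i' j * C1 j p := by
          intro j
          rw [hB'def, Finset.sum_mul]
        rw [Finset.sum_congr rfl (fun j _ => this j)]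
        exact hBC1 i' p
end Mat
section Tr
variable {A : Type u} [CommRing A] {M : ℕ → Type v}
    [∀ k, AddCommGroup (M k)] [∀ k, Module A (M k)]
    (ν : ∀ k, M (k + 1) →ₗ[A] M k)

/-- Composite transition maps of the inverse system (junk value `0` when `n < m`). -/
private def tr : ∀ n m : ℕ, M n →ₗ[A] M m
  | 0, 0 => LinearMap.id
  | 0, _ + 1 => 0
  | n + 1, m =>
    if h : m = n + 1 then by subst h; exact LinearMap.id
    else tr n m ∘ₗ ν n

private theorem tr_self : ∀ n, tr ν n n = LinearMap.id
  | 0 => rfl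
  | n + 1 => by simp [tr]

private theorem tr_peel_top {m n : ℕ} (h : m ≤ n) :
    tr ν (n + 1) m = tr ν n m ∘ₗ ν n := by
  have : ¬ (m = n + 1) := by omega
  simp [tr, this]

private theorem tr_peel_bot {m n : ℕ} (h : m + 1 ≤ n) :
    tr ν n m = ν m ∘ₗ tr ν n (m + 1) := by
  induction n with
  | zero => omega
  | succ n ih =>
    rcases Nat.lt_or_ge m n with h' | h'
    · rw [tr_peel_top ν (by omega), tr_peel_top ν (by omega), ih (by omega)]
      rfl
    · have : m = n := by omega
      subst this
      rw [tr_peel_top ν (le_refl m), tr_self ν, tr_self ν]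
      rfl

private theorem tr_apply_compat {m n : ℕ} (h : m ≤ n) (x : ∀ k, M k)
    (hx : ∀ k, ν k (x (k + 1)) = x k) : tr ν n m (x n) = x m := by
  induction n with
  | zero =>
    have : m = 0 := by omega
    subst this
    simp [tr_self]
  | succ n ih =>
    rcases Nat.lt_or_ge m (n + 1) with h' | h'
    · rw [tr_peel_top ν (by omega)]
      show tr ν n m (ν n (x (n + 1))) = x m
      rw [hx n]
      exact ih (by omega)
    · have : m = n + 1 := by omega
      subst this
      simp [tr_self]

private theorem tr_surjective (hsurj : ∀ k, Function.Surjective (ν k)) {m n : ℕ} (h : m ≤ n) :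
    Function.Surjective (tr ν n m) := by
  induction n with
  | zero =>
    have : m = 0 := by omega
    subst this
    simp only [tr_self]
    exact fun x => ⟨x, rfl⟩
  | succ n ih =>
    rcases Nat.lt_or_ge m (n + 1) with h' | h'
    · rw [tr_peel_top ν (by omega)]
      exact (ih (by omega)).comp (hsurj n)
    · have : m = n + 1 := by omega
      subst this
      simp only [tr_self]
      exact fun x => ⟨x, rfl⟩

private theorem tr_tr {m n k : ℕ} (h1 : m ≤ n) (h2 : n ≤ k) :
    (tr ν n m) ∘ₗ (tr ν k n) = tr ν k m := by
  induction k with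
  | zero =>
    have hn : n = 0 := by omega
    subst hn
    rw [tr_self]
    rfl
  | succ k ih =>
    rcases Nat.lt_or_ge n (k + 1) with h' | h'
    · rw [tr_peel_top ν (by omega), tr_peel_top ν (by omega), ← LinearMap.comp_assoc,
        ih (by omega)]
    · have : n = k + 1 := by omega
      subst this
      rw [tr_self]
      rfl
end Tr
section Helpers
variable {A : Type u} [CommRing A]

/-- The linear map `(v₁,…,vₜ) ↦ ∑ vₚ • rₚ` into a pi type. -/
private def combV {s t : ℕ} (r : Fin t → Fin s → A) : (Fin t → A) →ₗ[A] (Fin s → A) where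
  toFun := fun v i => ∑ q, v q * r q i
  map_add' := fun v w => by
    funext i
    simp [add_mul, Finset.sum_add_distrib]
  map_smul' := fun c v => by
    funext i
    simp [Finset.mul_sum, mul_assoc]

/-- The linear map `(v₁,…,vₛ) ↦ ∑ vᵢ * fᵢ`. -/
private def comb {s : ℕ} (f : Fin s → A) : (Fin s → A) →ₗ[A] A where
  toFun := fun v => ∑ i, v i * f i
  map_add' := fun v w => by simp [add_mul, Finset.sum_add_distrib]
  map_smul' := fun c v => by simp [Finset.mul_sum, mul_assoc]

private theorem pi_mem_smul_top {s : ℕ} {I : Ideal A} {g : Fin s → A} :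
    g ∈ (I • ⊤ : Submodule A (Fin s → A)) ↔ ∀ i, g i ∈ I := by
  constructor
  · intro hg i
    refine Submodule.smul_induction_on hg (fun r hr n _ => ?_) (fun u v hu hv => ?_)
    · exact I.mul_mem_right _ hr
    · exact I.add_mem hu hv
  · intro hg
    have hrep : g = ∑ i, (g i) • (Pi.single i 1 : Fin s → A) := by
      funext j
      rw [Finset.sum_apply]
      simp [Pi.single_apply, mul_ite, Finset.sum_ite_eq']
    rw [hrep]
    exact Submodule.sum_mem _ fun i _ =>
      Submodule.smul_mem_smul (hg i) Submodule.mem_top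

private theorem mem_smul_range {t : ℕ} {P : Type u} [AddCommGroup P] [Module A P]
    (I : Ideal A) (Θ : (Fin t → A) →ₗ[A] P) {g : P} (hg : g ∈ I • (LinearMap.range Θ)) :
    ∃ h : Fin t → A, (∀ q, h q ∈ I) ∧ Θ h = g := by
  have heq : I • (LinearMap.range Θ) = Submodule.map Θ (I • (⊤ : Submodule A (Fin t → A))) := by
    rw [Submodule.map_smul'', Submodule.map_top]
  rw [heq] at hg
  obtain ⟨h, hh, rfl⟩ := hg
  exact ⟨h, pi_mem_smul_top.1 hh, rfl⟩

/-- `Ψ` applied to a module `N`: `(w₁,…,wₜ) ↦ (∑ q, r q i • w q)ᵢ`. -/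
private def psiMap {s t : ℕ} (r : Fin t → Fin s → A) (N : Type*) [AddCommGroup N]
    [Module A N] : (Fin t → N) →ₗ[A] (Fin s → N) where
  toFun := fun w i => ∑ q, r q i • w q
  map_add' := fun v w => by
    funext i
    simp [smul_add, Finset.sum_add_distrib]
  map_smul' := fun c v => by
    funext i
    rw [RingHom.id_apply, Pi.smul_apply, Finset.smul_sum]
    show ∑ q, r q i • (c • v q) = _
    exact Finset.sum_congr rfl fun q _ => smul_comm _ _ _

private theorem comb_apply {s : ℕ} (f v : Fin s → A) : comb f v = ∑ i, v i * f i := rfl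

private theorem combV_apply {s t : ℕ} (r : Fin t → Fin s → A) (v : Fin t → A) (i : Fin s) :
    combV r v i = ∑ q, v q * r q i := rfl

private theorem psiMap_apply {s t : ℕ} (r : Fin t → Fin s → A) (N : Type*) [AddCommGroup N]
    [Module A N] (w : Fin t → N) (i : Fin s) : psiMap r N w i = ∑ q, r q i • w q := rfl

end Helpers
section TrPi
variable {A : Type u} [CommRing A] {M : ℕ → Type v}
    [∀ k, AddCommGroup (M k)] [∀ k, Module A (M k)]

/-- Componentwise transition map on `t`-tuples. -/
private def trPi (ν : ∀ k, M (k + 1) →ₗ[A] M k) (n m t : ℕ) :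
    (Fin t → M n) →ₗ[A] (Fin t → M m) :=
  LinearMap.pi fun q => (tr ν n m) ∘ₗ LinearMap.proj q

private theorem trPi_apply (ν : ∀ k, M (k + 1) →ₗ[A] M k) (n m t : ℕ)
    (w : Fin t → M n) (q : Fin t) : trPi ν n m t w q = tr ν n m (w q) := rfl
end TrPi
/-- The limit `M̂ = lim M_k` of an inverse system of `A`-modules, realized as the
submodule of compatible sequences in the product. -/
def adicLimit {A : Type*} [CommRing A] {M : ℕ → Type*}
    [∀ k, AddCommGroup (M k)] [∀ k, Module A (M k)]
    (ν : ∀ k, M (k + 1) →ₗ[A] M k) : Submodule A (∀ k, M k) where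
  carrier := { f | ∀ k, ν k (f (k + 1)) = f k }
  add_mem' := fun hf hg k => by simp [hf k, hg k]
  zero_mem' := fun k => by simp
  smul_mem' := fun r f hf k => by simp [hf k]

/-- Let `A` be a noetherian commutative ring, `𝔞` an ideal, and `{M_k}` an `𝔞`-adic
system in which each `M_k` is a flat `A/𝔞^{k+1}`-module. Then the limit
`M̂ = lim M_k` is a flat `A`-module. -/
theorem flat_adic_system_limit_flat {A : Type*} [CommRing A] [IsNoetherianRing A]
    (a : Ideal A)
    (M : ℕ → Type*) [∀ k, AddCommGroup (M k)] [∀ k, Module A (M k)]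
    [∀ k, Module (A ⧸ a ^ (k + 1)) (M k)]
    [∀ k, IsScalarTower A (A ⧸ a ^ (k + 1)) (M k)]
    [∀ k, Module.Flat (A ⧸ a ^ (k + 1)) (M k)]
    (ν : ∀ k, M (k + 1) →ₗ[A] M k)
    (hsurj : ∀ k, Function.Surjective (ν k))
    (hker : ∀ k, LinearMap.ker (ν k) = (a ^ (k + 1)) • (⊤ : Submodule A (M (k + 1)))) :
    Module.Flat A (↥(adicLimit ν)) := by
  classical
  apply flat_of_rel
  intro s f x hx
  -- the levelwise components of the `x i`
  set z : ∀ n : ℕ, Fin s → M n := fun n i => (x i : ∀ k, M k) n with hzdef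
  have hzc : ∀ (i : Fin s) (k : ℕ), ν k (z (k+1) i) = z k i := fun i k => (x i).2 k
  have hztr : ∀ {m n : ℕ}, m ≤ n → ∀ i, tr ν n m (z n i) = z m i :=
    fun {m n} h i => tr_apply_compat ν h _ (fun k => (x i).2 k)
  have hrel : ∀ n, ∑ i, f i • z n i = 0 := by
    intro n
    have h1 : ((∑ i, f i • x i : adicLimit ν) : ∀ k, M k) n = ∑ i, f i • z n i := by
      rw [AddSubmonoidClass.coe_finset_sum, Finset.sum_apply]
      rfl
    rw [hx] at h1
    simpa using h1.symm
  -- quotient scalars act through `A`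
  have qsmul : ∀ (n : ℕ) (b : A) (v : M n), (Ideal.Quotient.mk (a ^ (n+1)) b) • v = b • v :=
    fun n b v => by rw [← Ideal.Quotient.algebraMap_eq, algebraMap_smul]
  have hkill : ∀ (n : ℕ) (b : A), b ∈ a ^ (n+1) → ∀ v : M n, b • v = 0 := by
    intro n b hb v
    rw [← qsmul n b v, Ideal.Quotient.eq_zero_iff_mem.mpr hb, zero_smul]
  -- the ideal generated by the relation, and the module of relations
  set J : Ideal A := Ideal.span (Set.range f) with hJdef
  have hJ : LinearMap.range (comb f) = J := by
    apply le_antisymm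
    · rintro _ ⟨v, rfl⟩
      rw [comb_apply]
      exact Submodule.sum_mem _ fun i _ =>
        J.mul_mem_left _ (Ideal.subset_span ⟨i, rfl⟩)
    · rw [hJdef, Ideal.span_le]
      rintro _ ⟨i, rfl⟩
      refine ⟨Pi.single i 1, ?_⟩
      rw [comb_apply]
      simp [Pi.single_apply, ite_mul, Finset.sum_ite_eq]
  set Rel : Submodule A (Fin s → A) := LinearMap.ker (comb f) with hReldef
  obtain ⟨t, r, hr⟩ : ∃ (t : ℕ) (r : Fin t → (Fin s → A)),
      Submodule.span A (Set.range r) = Rel :=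
    Submodule.fg_iff_exists_fin_generating_family.mp (IsNoetherian.noetherian Rel)
  have hrRel : ∀ q, comb f (r q) = 0 := by
    intro q
    have : r q ∈ Rel := by rw [← hr]; exact Submodule.subset_span ⟨q, rfl⟩
    exact this
  have hrange : LinearMap.range (combV r) = Rel := by
    apply le_antisymm
    · rintro _ ⟨v, rfl⟩
      rw [← hr]
      have hv : combV r v = ∑ q, v q • r q := by
        funext i
        rw [Finset.sum_apply, combV_apply]
        rfl
      rw [hv]
      exact Submodule.sum_mem _ fun q _ =>
        Submodule.smul_mem _ _ (Submodule.subset_span ⟨q, rfl⟩)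
    · rw [← hr, Submodule.span_le]
      rintro _ ⟨q, rfl⟩
      refine ⟨Pi.single q 1, ?_⟩
      funext i
      rw [combV_apply]
      simp [Pi.single_apply, ite_mul, Finset.sum_ite_eq]
  -- Artin–Rees constants
  obtain ⟨cJ, hcJ⟩ := Ideal.exists_pow_inf_eq_pow_smul a (J : Submodule A A)
  obtain ⟨cR, hcR⟩ := Ideal.exists_pow_inf_eq_pow_smul a Rel
  -- membership of a ring element in `I • ⊤`
  have memSmulTop : ∀ {I : Ideal A} {g : A}, g ∈ I → g ∈ (I • ⊤ : Submodule A A) := by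
    intro I g hg
    have := Submodule.smul_mem_smul hg (Submodule.mem_top (x := (1:A)))
    simpa using this
  -- generators represent everything in `Rel`
  have genRep : ∀ (m : ℕ) (v : Fin s → A), v ∈ Rel → ∀ y : M m,
      (fun i => v i • y) ∈ LinearMap.range (psiMap r (M m)) := by
    intro m v hv
    rw [← hr] at hv
    induction hv using Submodule.span_induction with
    | mem u hu =>
      obtain ⟨q, rfl⟩ := hu
      intro y
      refine ⟨Pi.single q y, ?_⟩
      funext i
      rw [psiMap_apply]
      simp [Pi.single_apply, Finset.sum_ite_eq]
    | zero =>
      intro y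
      refine ⟨0, ?_⟩
      funext i
      rw [psiMap_apply]
      show ∑ q', r q' i • (0 : Fin t → M m) q' = (0:A) • y
      simp
    | add u v _ _ hiu hiv =>
      intro y
      have hmem := Submodule.add_mem _ (hiu y) (hiv y)
      convert hmem using 1
      funext i
      show (u i + v i) • y = _
      rw [add_smul]
      rfl
    | smul c u _ hiu =>
      intro y
      have hmem := hiu (c • y)
      convert hmem using 1
      funext i
      show (c * u i) • y = u i • (c • y)
      rw [mul_smul, smul_comm]
  -- Step A: the levelwise components satisfy the relation representation at each level
  have stepA : ∀ m : ℕ, ∃ w : Fin t → M m, psiMap r (M m) w = z m := by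
    intro m
    set n := m + (cJ + 1) with hndef
    -- solve the relation over `A ⧸ a^(n+1)` in `M n` using flatness
    have hrelq : ∑ i, (Ideal.Quotient.mk (a ^ (n+1)) (f i)) • z n i = 0 := by
      calc ∑ i, (Ideal.Quotient.mk (a ^ (n+1)) (f i)) • z n i
          = ∑ i, f i • z n i := Finset.sum_congr rfl fun i _ => qsmul n (f i) (z n i)
        _ = 0 := hrel n
    obtain ⟨u, bb, yy, hxb, hfb⟩ :=
      trivial_rel (R := A ⧸ a ^ (n+1)) (M := M n) hrelq
    choose b hb using fun (i : Fin s) (j : Fin u) => Ideal.Quotient.mk_surjective (bb i j)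
    have hbsm : ∀ i, z n i = ∑ j, b i j • yy j := by
      intro i
      rw [hxb i]
      exact Finset.sum_congr rfl fun j _ => by rw [← hb i j, qsmul]
    -- Artin–Rees correction: the defects lie in `a^(m+2) • J`
    have hgj : ∀ j : Fin u, ∃ h : Fin s → A, (∀ i, h i ∈ a ^ (m+2)) ∧
        ∑ i, h i * f i = ∑ i, f i * b i j := by
      intro j
      have h1 : (∑ i, f i * b i j) ∈ a ^ (n+1) := by
        rw [← Ideal.Quotient.eq_zero_iff_mem, map_sum, ← hfb j]
        exact Finset.sum_congr rfl fun i _ => by rw [map_mul, hb]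
      have h2 : (∑ i, f i * b i j) ∈ J :=
        Submodule.sum_mem _ fun i _ => J.mul_mem_right _ (Ideal.subset_span ⟨i, rfl⟩)
      have h3 : (∑ i, f i * b i j) ∈ (a ^ (n+1) • ⊤ ⊓ (J : Submodule A A)) :=
        ⟨memSmulTop h1, h2⟩
      rw [hcJ (n+1) (by omega)] at h3
      have h4 : (∑ i, f i * b i j) ∈ (a ^ (m+2) • (J : Submodule A A)) := by
        have hle : (a ^ (n+1-cJ) • (a ^ cJ • ⊤ ⊓ (J : Submodule A A))) ≤
            a ^ (m+2) • (J : Submodule A A) := by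
          rw [show n+1-cJ = m+2 from by omega]
          exact Submodule.smul_mono le_rfl inf_le_right
        exact hle h3
      rw [← hJ] at h4
      obtain ⟨h, hmem, heq⟩ := mem_smul_range _ _ h4
      refine ⟨h, hmem, ?_⟩
      rw [← heq, comb_apply]
    choose hc hc1 hc2 using hgj
    have hrho : ∀ j, (fun i => b i j - hc j i) ∈ Rel := by
      intro j
      show comb f _ = 0
      rw [comb_apply]
      have : ∀ i, (b i j - hc j i) * f i = f i * b i j - hc j i * f i := fun i => by ring
      rw [Finset.sum_congr rfl fun i _ => this i, Finset.sum_sub_distrib, hc2 j, sub_self]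
    -- push down to level `m`
    have hzm : z m ∈ LinearMap.range (psiMap r (M m)) := by
      have hzrep : z m = ∑ j, (fun i => (b i j - hc j i) • (tr ν n m (yy j))) := by
        funext i
        rw [Finset.sum_apply]
        have e1 : z m i = tr ν n m (z n i) := (hztr (by omega) i).symm
        rw [e1, hbsm i, map_sum]
        refine Finset.sum_congr rfl fun j _ => ?_
        rw [map_smul]
        rw [sub_smul, hkill m (hc j i)
          (Ideal.pow_le_pow_right (by omega) (hc1 j i)) (tr ν n m (yy j)), sub_zero]
      rw [hzrep]
      exact Submodule.sum_mem _ fun j _ => genRep m _ (hrho j) (tr ν n m (yy j))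
    obtain ⟨w, hw⟩ := hzm
    exact ⟨w, hw⟩
  -- the stable "syzygy" submodules at each level
  set E : ∀ m : ℕ, Submodule A (Fin t → M m) := fun m =>
    Submodule.span A {g | ∃ v, combV r v = 0 ∧ ∃ y : M m, g = fun q => v q • y} with hEdef
  -- fact II : elements of `E m` lift to kernel elements at any higher level
  have factII : ∀ (m n : ℕ), m ≤ n →
      E m ≤ Submodule.map (trPi ν n m t) (LinearMap.ker (psiMap r (M n))) := by
    intro m n hmn
    rw [hEdef, Submodule.span_le]
    rintro g ⟨v, hv, y, rfl⟩
    obtain ⟨y', hy'⟩ := tr_surjective ν hsurj hmn y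
    refine ⟨fun q => v q • y', ?_, ?_⟩
    · show psiMap r (M n) _ = 0
      funext i
      rw [psiMap_apply]
      have hterm : ∀ q : Fin t, r q i • (v q • y') = (v q * r q i) • y' := fun q => by
        rw [smul_smul, mul_comm]
      rw [Finset.sum_congr rfl fun q _ => hterm q, ← Finset.sum_smul]
      have h0 : (∑ q, v q * r q i) = 0 := by
        have := congrFun hv i
        rw [combV_apply] at this
        exact this
      rw [h0, zero_smul]
      rfl
    · funext q
      rw [trPi_apply, map_smul, hy']
  -- fact I : kernel elements pushed down at least `cR+1` levels land in `E m`
  have factI : ∀ (m n : ℕ), m + cR ≤ n → ∀ w : Fin t → M n,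
      psiMap r (M n) w = 0 → trPi ν n m t w ∈ E m := by
    intro m n hmn w hw
    have hw' : ∀ i, ∑ q, (Ideal.Quotient.mk (a ^ (n+1)) (r q i)) • w q = 0 := by
      intro i
      have h0 : ∑ q, r q i • w q = 0 := by
        have := congrFun hw i
        rw [psiMap_apply] at this
        exact this
      calc ∑ q, (Ideal.Quotient.mk (a ^ (n+1)) (r q i)) • w q
          = ∑ q, r q i • w q := Finset.sum_congr rfl fun q _ => qsmul n (r q i) (w q)
        _ = 0 := h0
    obtain ⟨u, CC, e, hC1, hC2⟩ := matrix_rel (R := A ⧸ a ^ (n+1)) s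
      (fun i q => Ideal.Quotient.mk (a ^ (n+1)) (r q i)) w hw'
    choose C hCl using fun (q : Fin t) (p : Fin u) => Ideal.Quotient.mk_surjective (CC q p)
    have hvm2 : ∀ p, combV r (fun q => C q p) ∈ (a ^ (m+1) • Rel : Submodule A (Fin s → A)) := by
      intro p
      have hvm : combV r (fun q => C q p) ∈ (a ^ (n+1) • ⊤ ⊓ Rel : Submodule A (Fin s → A)) := by
        refine Submodule.mem_inf.mpr ⟨?_, ?_⟩
        · rw [pi_mem_smul_top]
          intro i
          rw [← Ideal.Quotient.eq_zero_iff_mem, combV_apply, map_sum, ← hC2 i p]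
          exact Finset.sum_congr rfl fun q _ => by rw [map_mul, hCl q p, mul_comm]
        · rw [← hrange]; exact ⟨_, rfl⟩
      rw [hcR (n+1) (by omega)] at hvm
      have hle : (a ^ (n+1-cR) • (a ^ cR • ⊤ ⊓ Rel) : Submodule A (Fin s → A)) ≤
          a ^ (m+1) • Rel :=
        Submodule.smul_mono (Ideal.pow_le_pow_right (by omega)) inf_le_right
      exact hle hvm
    have hvm3 : ∀ p, ∃ h : Fin t → A, (∀ q, h q ∈ a ^ (m+1)) ∧
        combV r h = combV r (fun q => C q p) := by
      intro p
      have h5 := hvm2 p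
      rw [← hrange] at h5
      exact mem_smul_range _ _ h5
    choose hcoef h1 h2 using hvm3
    have hv' : ∀ p, combV r (fun q => C q p - hcoef p q) = 0 := by
      intro p
      have : (fun q => C q p - hcoef p q) = (fun q => C q p) - hcoef p := by
        funext q
        rfl
      rw [this, map_sub, h2 p, sub_self]
    have himg : trPi ν n m t w = ∑ p, (fun q => (C q p - hcoef p q) • (tr ν n m (e p))) := by
      funext q
      rw [Finset.sum_apply, trPi_apply, hC1 q, map_sum]
      refine Finset.sum_congr rfl fun p _ => ?_
      rw [← hCl q p, qsmul, map_smul, sub_smul,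
        hkill m (hcoef p q) (h1 p q) (tr ν n m (e p)), sub_zero]
    rw [himg]
    exact Submodule.sum_mem _ fun p _ =>
      Submodule.subset_span ⟨_, hv' p, _, rfl⟩
  -- the stable solution sets and the inductive step
  have hSmap : ∀ {m n : ℕ}, m ≤ n → ∀ {σ : Fin t → M n}, psiMap r (M n) σ = z n →
      psiMap r (M m) (trPi ν n m t σ) = z m := by
    intro m n h σ hσ
    funext i
    rw [psiMap_apply]
    have hterm : ∀ q : Fin t, r q i • tr ν n m (σ q) = tr ν n m (r q i • σ q) :=
      fun q => (map_smul _ _ _).symm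
    rw [Finset.sum_congr rfl fun q _ => by rw [trPi_apply, hterm q], ← map_sum]
    have : (∑ q, r q i • σ q) = z n i := by
      have := congrFun hσ i
      rw [psiMap_apply] at this
      exact this
    rw [this]
    exact hztr h i
  have step : ∀ (m : ℕ) (w : Fin t → M m),
      (∃ n, m + cR + 1 ≤ n ∧ ∃ σ : Fin t → M n, psiMap r (M n) σ = z n ∧ trPi ν n m t σ = w) →
      ∃ w' : Fin t → M (m+1),
        (∃ n, (m+1) + cR + 1 ≤ n ∧ ∃ σ : Fin t → M n,
          psiMap r (M n) σ = z n ∧ trPi ν n (m+1) t σ = w') ∧ ∀ q, ν m (w' q) = w q := by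
    intro m w hw
    obtain ⟨n, hn, σ, hσ, rfl⟩ := hw
    obtain ⟨τ0, hτ0⟩ := stepA (n+1)
    set τ' : Fin t → M n := trPi ν (n+1) n t τ0 with hτ'def
    have hτ'S : psiMap r (M n) τ' = z n := hSmap (by omega) hτ0
    have hκ : psiMap r (M n) (σ - τ') = 0 := by
      rw [map_sub, hσ, hτ'S, sub_self]
    have hd : trPi ν n m t (σ - τ') ∈ E m := factI m n (by omega) _ hκ
    obtain ⟨ρ, hρker, hρeq⟩ := factII m (n+1) (by omega) hd
    refine ⟨trPi ν (n+1) (m+1) t (τ0 + ρ), ⟨n+1, by omega, τ0 + ρ, ?_, rfl⟩, ?_⟩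
    · rw [map_add, hτ0, hρker, add_zero]
    · intro q
      -- compute both sides via `tr`
      have e1 : ν m (trPi ν (n+1) (m+1) t (τ0 + ρ) q) = tr ν (n+1) m ((τ0 + ρ) q) := by
        rw [trPi_apply]
        rw [tr_peel_bot ν (show m + 1 ≤ n + 1 by omega)]
        rfl
      rw [e1]
      have e2 : tr ν (n+1) m ((τ0 + ρ) q) = tr ν (n+1) m (τ0 q) + tr ν (n+1) m (ρ q) := by
        rw [show (τ0 + ρ) q = τ0 q + ρ q from rfl, map_add]
      rw [e2]
      have e3 : tr ν (n+1) m (ρ q) = tr ν n m (σ q) - tr ν n m (τ' q) := by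
        have := congrFun hρeq q
        rw [trPi_apply] at this
        have h4 : tr ν (n+1) m (ρ q) = trPi ν n m t (σ - τ') q := this
        rw [h4, trPi_apply]
        show tr ν n m (σ q - τ' q) = _
        rw [map_sub]
      have e4 : tr ν (n+1) m (τ0 q) = tr ν n m (τ' q) := by
        rw [hτ'def, trPi_apply]
        have := congrFun (congrArg DFunLike.coe (tr_tr ν (show m ≤ n by omega)
          (show n ≤ n + 1 by omega))) (τ0 q)
        exact this.symm
      rw [e3, e4, trPi_apply]
      abel
  -- build the compatible family by recursion
  have hT0 : ∃ w : Fin t → M 0, ∃ n, 0 + cR + 1 ≤ n ∧ ∃ σ : Fin t → M n,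
      psiMap r (M n) σ = z n ∧ trPi ν n 0 t σ = w := by
    obtain ⟨σ, hσ⟩ := stepA (cR + 1)
    exact ⟨trPi ν (cR+1) 0 t σ, cR+1, by omega, σ, hσ, rfl⟩
  let g : ∀ m : ℕ, {w : Fin t → M m // ∃ n, m + cR + 1 ≤ n ∧ ∃ σ : Fin t → M n,
      psiMap r (M n) σ = z n ∧ trPi ν n m t σ = w} := fun m =>
    Nat.rec ⟨hT0.choose, hT0.choose_spec⟩
      (fun m p => ⟨(step m p.1 p.2).choose, (step m p.1 p.2).choose_spec.1⟩) m
  have hgcompat : ∀ m q, ν m ((g (m+1)).1 q) = (g m).1 q := fun m q =>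
    (step m (g m).1 (g m).2).choose_spec.2 q
  have hgS : ∀ m, psiMap r (M m) (g m).1 = z m := by
    intro m
    obtain ⟨n, hn, σ, hσ, hσ2⟩ := (g m).2
    rw [← hσ2]
    exact hSmap (by omega) hσ
  have hmem : ∀ q : Fin t, (fun m => (g m).1 q) ∈ adicLimit ν := by
    intro q
    show ∀ k, ν k ((g (k+1)).1 q) = (g k).1 q
    exact fun k => hgcompat k q
  refine ⟨t, fun i j => r j i, fun q => ⟨fun m => (g m).1 q, hmem q⟩, fun i => ?_, fun j => ?_⟩
  · apply Subtype.ext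
    funext m
    have hcoe : ((∑ j, (r j i) • (⟨fun m => (g m).1 j, hmem j⟩ : adicLimit ν) : adicLimit ν) :
        ∀ k, M k) m = ∑ j, r j i • (g m).1 j := by
      rw [AddSubmonoidClass.coe_finset_sum, Finset.sum_apply]
      rfl
    show (x i : ∀ k, M k) m = _
    rw [hcoe]
    have := congrFun (hgS m) i
    rw [psiMap_apply] at this
    exact this.symm
  · have h0 := hrRel j
    rw [comb_apply] at h0
    rw [← h0]
    exact Finset.sum_congr rfl fun i _ => mul_comm _ _
end

section
/- Let A be a noetherian commutative ring, 𝔞 an ideal, and M a flat A-module. Then the 𝔞-adic completion M̂ = lim M/𝔞^{k+1}M is a flat A-module. -/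
open TensorProduct LinearMap Submodule

namespace AdicFlatAux

variable {A : Type*} [CommRing A] {M : Type*} [AddCommGroup M] [Module A M]

theorem pi_mem_smul_top {ι : Type*} [Fintype ι] [DecidableEq ι] (b : Ideal A)
    (x : ι → M) :
    x ∈ b • (⊤ : Submodule A (ι → M)) ↔ ∀ i, x i ∈ b • (⊤ : Submodule A M) := by
  constructor
  · intro hx i
    have h : x i ∈ (b • (⊤ : Submodule A (ι → M))).map (LinearMap.proj i) :=
      Submodule.mem_map_of_mem hx
    rw [Submodule.map_smul''] at h
    exact (smul_mono_right b le_top : b • _ ≤ b • (⊤ : Submodule A M)) h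
  · intro h
    rw [← Finset.univ_sum_single x]
    refine Submodule.sum_mem _ fun i _ => ?_
    have : Pi.single i (x i) ∈ (b • (⊤ : Submodule A M)).map
        (LinearMap.single A (fun _ : ι => M) i) := Submodule.mem_map_of_mem (h i)
    rw [Submodule.map_smul''] at this
    exact (smul_mono_right b le_top : b • _ ≤ b • (⊤ : Submodule A (ι → M))) this

variable (M) in
/-- The linear map on `Fin p → P` induced by the matrix `C` (columns `C i`). -/
noncomputable def matMap {p q : ℕ} (C : Fin p → Fin q → A) :
    (Fin p → M) →ₗ[A] (Fin q → M) :=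
  LinearMap.pi fun j => ∑ i, C i j • LinearMap.proj i

theorem matMap_apply {p q : ℕ} (C : Fin p → Fin q → A) (u : Fin p → M) (j : Fin q) :
    matMap M C u j = ∑ i, C i j • u i := by
  simp [matMap]

variable (A M) in
/-- The standard iso `M ⊗ A^q ≃ M^q`. -/
noncomputable def eqv (q : ℕ) : M ⊗[A] (Fin q → A) ≃ₗ[A] (Fin q → M) :=
  TensorProduct.piScalarRight A A M (Fin q)

theorem eqv_tmul (q : ℕ) (m : M) (v : Fin q → A) :
    eqv A M q (m ⊗ₜ v) = fun j => v j • m := by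
  simp [eqv, TensorProduct.piScalarRight_apply, TensorProduct.piScalarRightHom_tmul]

theorem eqv_conj {p q : ℕ} (C : Fin p → Fin q → A) :
    (eqv A M q).toLinearMap ∘ₗ (lTensor M (matMap A C)) =
      (matMap M C) ∘ₗ (eqv A M p).toLinearMap := by
  apply TensorProduct.ext'
  intro m v
  funext j
  simp only [LinearMap.coe_comp, Function.comp_apply, LinearEquiv.coe_coe, lTensor_tmul,
    eqv_tmul, matMap_apply, Finset.sum_smul, smul_smul]
  simp [smul_eq_mul]

variable (A M) in
/-- The image of `M ⊗ V` inside `M^q`. -/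
noncomputable def tm {q : ℕ} (V : Submodule A (Fin q → A)) : Submodule A (Fin q → M) :=
  Submodule.map (eqv A M q).toLinearMap (LinearMap.range (lTensor M V.subtype))

theorem mem_tm_of_tmul {q : ℕ} (V : Submodule A (Fin q → A)) (m : M) {v : Fin q → A}
    (hv : v ∈ V) : (fun j => v j • m) ∈ tm A M V := by
  exact ⟨m ⊗ₜ v, ⟨m ⊗ₜ ⟨v, hv⟩, rfl⟩, by simpa using eqv_tmul (M := M) q m v⟩

/-- Induction-style description of `tm`. -/
theorem tm_le {q : ℕ} (V : Submodule A (Fin q → A)) (P : Submodule A (Fin q → M))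
    (h : ∀ (m : M), ∀ v ∈ V, (fun j => v j • m) ∈ P) : tm A M V ≤ P := by
  rintro x ⟨y, ⟨z, rfl⟩, rfl⟩
  induction z using TensorProduct.induction_on with
  | zero => simpa using P.zero_mem
  | tmul m v =>
      have := h m v.1 v.2
      simpa [eqv_tmul] using this
  | add z₁ z₂ h₁ h₂ => simpa [map_add] using P.add_mem h₁ h₂

theorem tm_mono {q : ℕ} {V₁ V₂ : Submodule A (Fin q → A)} (h : V₁ ≤ V₂) :
    tm A M V₁ ≤ tm A M V₂ :=
  tm_le _ _ fun m v hv => mem_tm_of_tmul _ m (h hv)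

theorem tm_smul_le {q : ℕ} (b : Ideal A) (V : Submodule A (Fin q → A)) :
    tm A M (b • V) ≤ b • tm A M V := by
  refine tm_le _ _ fun m v hv => ?_
  refine Submodule.smul_induction_on hv (fun t ht w hw => ?_) (fun w₁ w₂ hw₁ hw₂ => ?_)
  · have : (fun j => (t • w) j • m) = t • fun j => w j • m := by
      funext j; simp [smul_smul]
    rw [this]
    exact Submodule.smul_mem_smul ht (mem_tm_of_tmul V m hw)
  · have : (fun j => (w₁ + w₂) j • m) = (fun j => w₁ j • m) + fun j => w₂ j • m := by
      funext j; simp [add_smul]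
    rw [this]
    exact Submodule.add_mem _ hw₁ hw₂

theorem tm_pow_smul_top {q : ℕ} (b : Ideal A) :
    tm A M (b • (⊤ : Submodule A (Fin q → A))) = b • (⊤ : Submodule A (Fin q → M)) := by
  refine le_antisymm ((tm_smul_le b ⊤).trans ?_) ?_
  · exact smul_mono_right _ le_top
  · intro x hx
    refine Submodule.smul_induction_on hx (fun t ht w _ => ?_) (fun w₁ w₂ h₁ h₂ => ?_)
    · have : t • w = ∑ j, (fun k => ((Pi.single j t : Fin q → A) k) • w j) := by
        funext k
        rw [Finset.sum_apply]
        simp [Pi.single_apply, ite_smul, Finset.sum_ite_eq']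
      rw [this]
      refine Submodule.sum_mem _ fun j _ => ?_
      refine mem_tm_of_tmul _ (w j) ?_
      rw [pi_mem_smul_top]
      intro k
      rcases eq_or_ne k j with rfl | hkj
      · have h1 : t • (1 : A) ∈ b • (⊤ : Submodule A A) :=
          Submodule.smul_mem_smul ht mem_top
        simpa using h1
      · simp [Pi.single_apply, hkj]
    · exact Submodule.add_mem _ h₁ h₂

theorem tm_range {p q : ℕ} (C : Fin p → Fin q → A) :
    tm A M (LinearMap.range (matMap A C)) = LinearMap.range (matMap M C) := by
  refine le_antisymm (tm_le _ _ fun m v hv => ?_) ?_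
  · obtain ⟨u, rfl⟩ := hv
    refine ⟨fun i => u i • m, ?_⟩
    funext j
    simp [matMap_apply, Finset.sum_smul, smul_smul, mul_comm]
  · rintro x ⟨u, rfl⟩
    have hsingle : ∀ (i : Fin p) (j : Fin q), matMap A C (Pi.single i 1) j = C i j := by
      intro i j
      rw [matMap_apply]
      simp only [Pi.single_apply, smul_eq_mul, mul_ite, mul_one, mul_zero]
      simp [Finset.sum_ite_eq']
    have : matMap M C u = ∑ i, fun j => (matMap A C (Pi.single i 1)) j • u i := by
      funext j
      rw [Finset.sum_apply]
      rw [matMap_apply]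
      exact Finset.sum_congr rfl fun i _ => by rw [hsingle]
    rw [this]
    exact Submodule.sum_mem _ fun i _ => mem_tm_of_tmul _ (u i) ⟨Pi.single i 1, rfl⟩

theorem lTensor_mkQ_eq_zero {P : Type*} [AddCommGroup P] [Module A P]
    (V : Submodule A P) {z : M ⊗[A] P}
    (hz : z ∈ LinearMap.range (lTensor M V.subtype)) : lTensor M V.mkQ z = 0 := by
  obtain ⟨w, rfl⟩ := hz
  rw [← LinearMap.comp_apply, ← lTensor_comp]
  have h0 : V.mkQ ∘ₗ V.subtype = 0 := by ext v; simp
  rw [h0, lTensor_zero, LinearMap.zero_apply]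

theorem mem_range_lTensor_inf [Module.Flat A M] {P : Type*} [AddCommGroup P] [Module A P]
    (V₁ V₂ : Submodule A P) {y : M ⊗[A] P}
    (hy₁ : y ∈ LinearMap.range (lTensor M V₁.subtype))
    (hy₂ : y ∈ LinearMap.range (lTensor M V₂.subtype)) :
    y ∈ LinearMap.range (lTensor M (V₁ ⊓ V₂).subtype) := by
  set g : P →ₗ[A] (P ⧸ V₁) × (P ⧸ V₂) := LinearMap.prod V₁.mkQ V₂.mkQ with hg
  have hex : Function.Exact ((V₁ ⊓ V₂).subtype) g := by
    rw [LinearMap.exact_iff, hg, LinearMap.ker_prod, Submodule.ker_mkQ, Submodule.ker_mkQ,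
      Submodule.range_subtype]
  have hex2 := Module.Flat.lTensor_exact M hex
  refine (hex2 y).mp ?_
  have hcomp : (TensorProduct.prodRight A A M (P ⧸ V₁) (P ⧸ V₂)).toLinearMap ∘ₗ lTensor M g
      = LinearMap.prod (lTensor M V₁.mkQ) (lTensor M V₂.mkQ) := by
    apply TensorProduct.ext'
    intro m p
    simp [hg]
  have : (TensorProduct.prodRight A A M (P ⧸ V₁) (P ⧸ V₂)) (lTensor M g y) = 0 := by
    rw [← LinearEquiv.coe_coe, ← LinearMap.comp_apply, hcomp]
    simp [LinearMap.prod_apply, lTensor_mkQ_eq_zero V₁ hy₁, lTensor_mkQ_eq_zero V₂ hy₂,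
      Prod.ext_iff]
  exact (_root_.map_eq_zero_iff _ (LinearEquiv.injective _)).mp this


theorem tm_inf [Module.Flat A M] {q : ℕ} (V₁ V₂ : Submodule A (Fin q → A)) :
    tm A M (V₁ ⊓ V₂) = tm A M V₁ ⊓ tm A M V₂ := by
  refine le_antisymm (le_inf (tm_mono inf_le_left) (tm_mono inf_le_right)) ?_
  rintro x ⟨hx₁, hx₂⟩
  obtain ⟨y, hy₁, rfl⟩ := hx₁
  obtain ⟨y₂, hy₂, hxy⟩ := hx₂
  have hyy : y₂ = y := (eqv A M q).injective hxy
  rw [hyy] at hy₂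
  exact ⟨y, mem_range_lTensor_inf V₁ V₂ hy₁ hy₂, rfl⟩

/-- The key Artin-Rees style approximation lemma for flat `M`. -/
theorem master [IsNoetherianRing A] [Module.Flat A M] (a : Ideal A) {p q : ℕ}
    (C : Fin p → Fin q → A) :
    ∃ c : ℕ, ∀ (n : ℕ) (x : Fin q → M), x ∈ LinearMap.range (matMap M C) →
      x ∈ (a ^ n • ⊤ : Submodule A (Fin q → M)) →
      ∃ u ∈ (a ^ (n - c) • ⊤ : Submodule A (Fin p → M)), matMap M C u = x := by
  obtain ⟨c, hc⟩ := Ideal.exists_pow_inf_eq_pow_smul a (LinearMap.range (matMap A C))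
  refine ⟨c, fun n x hxr hxs => ?_⟩
  by_cases hn : c ≤ n
  · have h1 : x ∈ tm A M ((a ^ n • ⊤) ⊓ LinearMap.range (matMap A C)) := by
      rw [tm_inf, tm_pow_smul_top, tm_range]
      exact ⟨hxs, hxr⟩
    have h2 : ((a ^ n • ⊤ : Submodule A (Fin q → A)) ⊓ LinearMap.range (matMap A C)) ≤
        (a ^ (n - c)) • LinearMap.range (matMap A C) := by
      rw [hc n hn]
      exact smul_mono_right _ inf_le_right
    have h3 : x ∈ (a ^ (n - c)) • LinearMap.range (matMap M C) := by
      have h4 := tm_mono (M := M) h2 h1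
      have h5 := tm_smul_le (M := M) (a ^ (n - c)) (LinearMap.range (matMap A C)) h4
      rwa [tm_range] at h5
    rw [← Submodule.map_top (matMap M C), ← Submodule.map_smul''] at h3
    obtain ⟨u, hu, rfl⟩ := h3
    exact ⟨u, hu, rfl⟩
  · obtain ⟨u, rfl⟩ := hxr
    have hnc : n - c = 0 := by omega
    refine ⟨u, ?_, rfl⟩
    rw [hnc, pow_zero, Ideal.one_eq_top, Submodule.top_smul]
    exact mem_top

theorem exact_matMap_of_exact [Module.Flat A M] {p q r : ℕ} (CT : Fin p → Fin q → A)
    (Cg : Fin q → Fin r → A)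
    (hex : Function.Exact (matMap A CT) (matMap A Cg)) :
    Function.Exact (matMap M CT) (matMap M Cg) := by
  have hex2 := Module.Flat.lTensor_exact M hex
  have hCT := fun z => congrFun (congrArg DFunLike.coe (eqv_conj (M := M) CT)) z
  have hCg := fun z => congrFun (congrArg DFunLike.coe (eqv_conj (M := M) Cg)) z
  simp only [LinearMap.coe_comp, Function.comp_apply, LinearEquiv.coe_coe] at hCT hCg
  intro y
  constructor
  · intro hy
    obtain ⟨z, rfl⟩ := (eqv A M q).surjective y
    have h1 : lTensor M (matMap A Cg) z = 0 := by
      apply (eqv A M r).injective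
      rw [hCg z, hy]
      simp
    obtain ⟨w, hw⟩ := (hex2 z).mp h1
    refine ⟨eqv A M p w, ?_⟩
    rw [← hCT w, hw]
  · rintro ⟨w, rfl⟩
    obtain ⟨w', rfl⟩ := (eqv A M p).surjective w
    rw [← hCT w', ← hCg (lTensor M (matMap A CT) w')]
    rw [hex2.apply_apply_eq_zero w']
    simp

/-- Every relation in the adic completion of a flat module over a Noetherian ring
is trivial. -/
theorem key [IsNoetherianRing A] [Module.Flat A M] (a : Ideal A) {r : ℕ} (g : Fin r → A)
    (y : Fin r → AdicCompletion a M) (hy : ∑ i, g i • y i = 0) :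
    ∃ (s : ℕ) (T : Fin s → Fin r → A) (z : Fin s → AdicCompletion a M),
      (∀ i, y i = ∑ j, T j i • z j) ∧ (∀ j, ∑ i, g i * T j i = 0) := by
  classical
  set Cg : Fin r → Fin 1 → A := fun i _ => g i with hCgdef
  obtain ⟨s, T, hT⟩ := Submodule.fg_iff_exists_fin_generating_family.mp
      (IsNoetherian.noetherian (LinearMap.ker (matMap A Cg)))
  have hTker : ∀ j, T j ∈ LinearMap.ker (matMap A Cg) := fun j => by
    rw [← hT]; exact Submodule.subset_span ⟨j, rfl⟩
  have hrangeT : LinearMap.range (matMap A T) = LinearMap.ker (matMap A Cg) := by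
    rw [← hT]
    apply le_antisymm
    · rintro _ ⟨u, rfl⟩
      have huT : matMap A T u = ∑ j, u j • T j := by
        funext i
        rw [matMap_apply, Finset.sum_apply]
        exact Finset.sum_congr rfl fun j _ => by simp [mul_comm]
      rw [huT]
      exact Submodule.sum_mem _ fun j _ =>
        Submodule.smul_mem _ _ (Submodule.subset_span ⟨j, rfl⟩)
    · rw [Submodule.span_le]
      rintro _ ⟨j, rfl⟩
      refine ⟨Pi.single j 1, ?_⟩
      funext i
      rw [matMap_apply]
      simp [Pi.single_apply, Finset.sum_ite_eq']
  have hexA : Function.Exact (matMap A T) (matMap A Cg) :=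
    LinearMap.exact_iff.mpr hrangeT.symm
  have hexM := exact_matMap_of_exact (M := M) T Cg hexA
  obtain ⟨c₁, hc₁⟩ := master (M := M) a T
  obtain ⟨c₂, hc₂⟩ := master (M := M) a Cg
  choose f hf using fun i => AdicCompletion.mk_surjective a M (y i)
  set h : ℕ → Fin r → M := fun n i => f i n with hhdef
  have hCauchy : ∀ {m n : ℕ}, n ≤ m → h m - h n ∈ (a ^ n • ⊤ : Submodule A (Fin r → M)) := by
    intro m n hnm
    rw [pi_mem_smul_top]
    intro i
    have heq := AdicCompletion.AdicCauchySequence.mk_eq_mk hnm (f i)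
    exact (Submodule.Quotient.eq _).mp heq
  have hrel : ∀ n, matMap M Cg (h n) ∈ (a ^ n • ⊤ : Submodule A (Fin 1 → M)) := by
    intro n
    rw [pi_mem_smul_top]
    intro k
    rw [matMap_apply]
    have h0 : (∑ i, g i • y i).val n = 0 := by rw [hy]; rfl
    rw [AdicCompletion.val_sum, Finset.sum_apply] at h0
    have h1 : ∀ i, (g i • y i).val n =
        Submodule.mkQ (a ^ n • ⊤ : Submodule A M) (g i • f i n) := by
      intro i
      rw [AdicCompletion.val_smul, ← hf i]
      rfl
    rw [Finset.sum_congr rfl fun i _ => h1 i, ← map_sum] at h0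
    have h2 : (∑ i, g i • f i n) ∈ (a ^ n • ⊤ : Submodule A M) := by
      rwa [← Submodule.Quotient.mk_eq_zero]
    simpa [hCgdef, hhdef] using h2
  set Inv : ℕ → (Fin s → M) → Prop :=
    fun n U => h (n + c₂) - matMap M T U ∈ (a ^ n • ⊤ : Submodule A (Fin r → M)) with hInvdef
  have claim : ∀ n U, Inv n U → ∃ η, η ∈ (a ^ (n - c₁) • ⊤ : Submodule A (Fin s → M)) ∧
      Inv (n + 1) (U + η) := by
    intro n U hU
    obtain ⟨w, hwmem, hweq⟩ := hc₂ (n + 1 + c₂) (matMap M Cg (h (n + 1 + c₂)))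
      ⟨h (n + 1 + c₂), rfl⟩ (hrel (n + 1 + c₂))
    have hwmem' : w ∈ (a ^ (n + 1) • ⊤ : Submodule A (Fin r → M)) :=
      Submodule.smul_mono_left (Ideal.pow_le_pow_right (by omega)) hwmem
    have hker : matMap M Cg (h (n + 1 + c₂) - w) = 0 := by rw [map_sub, hweq, sub_self]
    obtain ⟨ξ, hξ⟩ := (hexM _).mp hker
    have hmem2 : matMap M T (ξ - U) ∈ (a ^ n • ⊤ : Submodule A (Fin r → M)) := by
      rw [map_sub, hξ]
      have hre : h (n + 1 + c₂) - w - matMap M T U =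
          (h (n + 1 + c₂) - h (n + c₂)) + (h (n + c₂) - matMap M T U) - w := by abel
      rw [hre]
      refine Submodule.sub_mem _ (Submodule.add_mem _ ?_ hU) ?_
      · exact Submodule.smul_mono_left (Ideal.pow_le_pow_right (by omega))
          (hCauchy (by omega))
      · exact Submodule.smul_mono_left (Ideal.pow_le_pow_right (by omega)) hwmem'
    obtain ⟨η, hηmem, hηeq⟩ := hc₁ n (matMap M T (ξ - U)) ⟨ξ - U, rfl⟩ hmem2
    refine ⟨η, hηmem, ?_⟩
    show h ((n + 1) + c₂) - matMap M T (U + η) ∈ _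
    have hCTU : matMap M T (U + η) = h (n + 1 + c₂) - w := by
      rw [map_add, hηeq, map_sub, hξ]; abel
    rw [hCTU]
    have harith : (n + 1) + c₂ = n + 1 + c₂ := rfl
    rw [harith]
    simpa using hwmem'
  let U : ℕ → Fin s → M := fun n => Nat.rec (motive := fun _ => Fin s → M) 0
    (fun n Un => Un + if hU : Inv n Un then Classical.choose (claim n Un hU) else 0) n
  have hUsucc : ∀ n, U (n + 1) =
      U n + (if hU : Inv n (U n) then Classical.choose (claim n (U n) hU) else 0) :=
    fun n => rfl
  have hUInv : ∀ n, Inv n (U n) := by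
    intro n
    induction n with
    | zero =>
        show h (0 + c₂) - matMap M T (U 0) ∈ _
        rw [pow_zero, Ideal.one_eq_top, Submodule.top_smul]
        exact mem_top
    | succ n ih =>
        rw [hUsucc n, dif_pos ih]
        exact (Classical.choose_spec (claim n (U n) ih)).2
  have hUstep : ∀ n, U (n + 1) - U n ∈ (a ^ (n - c₁) • ⊤ : Submodule A (Fin s → M)) := by
    intro n
    rw [hUsucc n, dif_pos (hUInv n)]
    simpa using (Classical.choose_spec (claim n (U n) (hUInv n))).1
  have hZcauchy : ∀ j, AdicCompletion.IsAdicCauchy a M (fun n => U (n + c₁) j) := by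
    intro j
    rw [AdicCompletion.isAdicCauchy_iff]
    intro n
    rw [SModEq.sub_mem]
    have hs := hUstep (n + c₁)
    have hnn : n + c₁ - c₁ = n := by omega
    rw [hnn] at hs
    have hs2 := (pi_mem_smul_top _ _).mp hs j
    have hmem : U (n + c₁) j - U (n + 1 + c₁) j ∈ (a ^ n • ⊤ : Submodule A M) := by
      have harith3 : U (n + c₁) j - U (n + 1 + c₁) j = -(U (n + c₁ + 1) j - U (n + c₁) j) := by
        have harith2 : n + 1 + c₁ = n + c₁ + 1 := by omega
        rw [harith2]; abel
      rw [harith3]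
      exact Submodule.neg_mem _ hs2
    exact hmem
  set z : Fin s → AdicCompletion a M := fun j =>
    AdicCompletion.mk a M ⟨fun n => U (n + c₁) j, hZcauchy j⟩ with hzdef
  refine ⟨s, T, z, ?_, ?_⟩
  · intro i
    apply AdicCompletion.ext
    intro n
    have hdiff : h n - matMap M T (U (n + c₁)) ∈ (a ^ n • ⊤ : Submodule A (Fin r → M)) := by
      have h1 : h n - h (n + c₁ + c₂) = -((h (n + c₁ + c₂)) - h n) := by abel
      have h2 : h (n + c₁ + c₂) - h n ∈ (a ^ n • ⊤ : Submodule A (Fin r → M)) :=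
        hCauchy (by omega)
      have h3 : h ((n + c₁) + c₂) - matMap M T (U (n + c₁)) ∈
          (a ^ n • ⊤ : Submodule A (Fin r → M)) :=
        Submodule.smul_mono_left (Ideal.pow_le_pow_right (by omega)) (hUInv (n + c₁))
      have h4 : h n - matMap M T (U (n + c₁)) =
          (h n - h (n + c₁ + c₂)) + (h ((n + c₁) + c₂) - matMap M T (U (n + c₁))) :=
        (sub_add_sub_cancel _ _ _).symm
      rw [h4, h1]
      exact Submodule.add_mem _ (Submodule.neg_mem _ h2) h3
    have hdi := (pi_mem_smul_top _ _).mp hdiff i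
    have hyval : (y i).val n = Submodule.mkQ (a ^ n • ⊤ : Submodule A M) (f i n) := by
      rw [← hf i]; rfl
    have hzval : (∑ j, T j i • z j).val n =
        Submodule.mkQ (a ^ n • ⊤ : Submodule A M) ((matMap M T (U (n + c₁))) i) := by
      rw [AdicCompletion.val_sum, Finset.sum_apply]
      have hj : ∀ j, (T j i • z j).val n =
          Submodule.mkQ (a ^ n • ⊤ : Submodule A M) (T j i • U (n + c₁) j) := by
        intro j
        rw [AdicCompletion.val_smul, hzdef]
        rfl
      rw [Finset.sum_congr rfl fun j _ => hj j, ← map_sum, matMap_apply]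
    rw [hyval, hzval]
    simp only [Submodule.mkQ_apply]
    rw [Submodule.Quotient.eq]
    simpa using hdi
  · intro j
    have h2 := LinearMap.mem_ker.mp (hTker j)
    have h3 := congrFun h2 0
    rw [matMap_apply] at h3
    simpa [hCgdef] using h3


/-- Every element of `J ⊗ N` is a finite `Fin`-indexed sum of pure tensors. -/
theorem exists_fin_tensor_repr {P N : Type*} [AddCommGroup P] [Module A P]
    [AddCommGroup N] [Module A N] (x : P ⊗[A] N) :
    ∃ (r : ℕ) (p : Fin r → P) (n : Fin r → N), x = ∑ i, p i ⊗ₜ n i := by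
  induction x using TensorProduct.induction_on with
  | zero => exact ⟨0, Fin.elim0, Fin.elim0, by simp⟩
  | tmul p n => exact ⟨1, fun _ => p, fun _ => n, by simp⟩
  | add x₁ x₂ h₁ h₂ =>
      obtain ⟨r₁, p₁, n₁, rfl⟩ := h₁
      obtain ⟨r₂, p₂, n₂, rfl⟩ := h₂
      refine ⟨r₁ + r₂, Fin.append p₁ p₂, Fin.append n₁ n₂, ?_⟩
      rw [Fin.sum_univ_add]
      simp [Fin.append_left, Fin.append_right]

end AdicFlatAux

/-- Let `A` be a noetherian commutative ring, `𝔞` an ideal, and `M` a flat `A`-module.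
Then the `𝔞`-adic completion `M̂ = lim M/𝔞^{k+1}M` is a flat `A`-module. -/
theorem adicCompletion_flat_of_flat {A : Type*} [CommRing A] [IsNoetherianRing A]
    (a : Ideal A) (M : Type*) [AddCommGroup M] [Module A M] [Module.Flat A M] :
    Module.Flat A (AdicCompletion a M) := by
  classical
  rw [Module.Flat.iff_rTensor_injective']
  intro J
  rw [← LinearMap.ker_eq_bot, eq_bot_iff]
  intro x hx
  rw [LinearMap.mem_ker] at hx
  obtain ⟨r, gJ, y, rfl⟩ := AdicFlatAux.exists_fin_tensor_repr x
  have h1 : ∑ i, ((gJ i : A)) • y i = 0 := by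
    have h2 := congrArg (TensorProduct.lid A (AdicCompletion a M)) hx
    rw [map_sum, map_zero] at h2
    simpa [TensorProduct.lid_tmul] using h2
  obtain ⟨s, T, z, hyz, hrel⟩ := AdicFlatAux.key a (fun i => (gJ i : A)) y h1
  have h3 : ∀ j, (∑ i, T j i • gJ i) = (0 : J) := by
    intro j
    apply Subtype.ext
    push_cast
    calc (∑ i, T j i * (gJ i : A)) = ∑ i, (gJ i : A) * T j i := by
          exact Finset.sum_congr rfl fun i _ => mul_comm _ _
      _ = 0 := hrel j
  calc (∑ i, gJ i ⊗ₜ[A] y i)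
      = ∑ i, gJ i ⊗ₜ[A] (∑ j, T j i • z j) := by
        exact Finset.sum_congr rfl fun i _ => by rw [hyz i]
    _ = ∑ i, ∑ j, (T j i • gJ i) ⊗ₜ[A] z j := by
        refine Finset.sum_congr rfl fun i _ => ?_
        rw [TensorProduct.tmul_sum]
        exact Finset.sum_congr rfl fun j _ => by
          rw [TensorProduct.tmul_smul, TensorProduct.smul_tmul']
    _ = ∑ j, (∑ i, T j i • gJ i) ⊗ₜ[A] z j := by
        rw [Finset.sum_comm]
        exact Finset.sum_congr rfl fun j _ => (TensorProduct.sum_tmul _ _ _).symm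
    _ = 0 := by
        refine Finset.sum_eq_zero fun j _ => ?_
        rw [h3 j, TensorProduct.zero_tmul]
end
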